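/- arXiv:1208.5453 — 2 statements merged into one kernel-verified Lean document; each statement's English description precedes it below -/
import Mathlib

section
/- Let g = g_{−k} ⊕ ⋯ ⊕ g_{−1} be a negatively ℤ-graded nilpotent Lie algebra, and let δ : Λ^ℓ g → Λ^{ℓ−1} g be the Chevalley–Eilenberg boundary. An ℓ-dimensional subspace e ⊆ g_{−1}, viewed via the Plücker embedding as a decomposable element ê ∈ Λ^ℓ g_{−1}, satisfies δ(ê) = 0 if and only if e is an abelian subalgebra (i.e., [e,e] = 0). -/
/-- A decomposable element `x₁ ∧ ⋯ ∧ xₙ` of the `n`-th exterior power. -/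
noncomputable def wedge {R : Type*} [CommRing R] {M : Type*} [AddCommGroup M] [Module R M]
    (n : ℕ) (v : Fin n → M) : ⋀[R]^n M :=
  ⟨ExteriorAlgebra.ιMulti R n v, ExteriorAlgebra.ιMulti_range R n (Set.mem_range_self v)⟩

/-- Given `j < k` in `Fin (n+2)`, the order-preserving inclusion of the remaining indices
`Fin n → Fin (n+2)`. -/
def removeTwo {n : ℕ} (j k : Fin (n + 2)) : Fin n → Fin (n + 2) :=
  fun m => j.succAbove ((⟨(k : ℕ) - 1, by have := k.isLt; omega⟩ : Fin (n + 1)).succAbove m)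

private lemma kaux {n : ℕ} {j k : Fin (n + 2)} (h : j < k) :
    j.succAbove (⟨(k : ℕ) - 1, by have := k.isLt; omega⟩ : Fin (n + 1)) = k := by
  have hk : 0 < (k : ℕ) := lt_of_le_of_lt (Nat.zero_le _) h
  have hj : (j : ℕ) < (k : ℕ) := h
  rw [Fin.succAbove, if_neg]
  · apply Fin.ext; simp [Fin.val_succ]; omega
  · simp [Fin.lt_def]; omega

private lemma removeTwo_injective {n : ℕ} (j k : Fin (n + 2)) :
    Function.Injective (removeTwo j k) := fun a b hab => by
  unfold removeTwo at hab
  exact Fin.succAbove_right_injective (Fin.succAbove_right_injective hab)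

private lemma removeTwo_ne {n : ℕ} {j k : Fin (n + 2)} (h : j < k) (t : Fin n) :
    removeTwo j k t ≠ j ∧ removeTwo j k t ≠ k := by
  constructor
  · exact Fin.succAbove_ne j _
  · intro hc
    have hc' : (⟨(k : ℕ) - 1, by have := k.isLt; omega⟩ : Fin (n + 1)).succAbove t
        = (⟨(k : ℕ) - 1, by have := k.isLt; omega⟩ : Fin (n + 1)) :=
      Fin.succAbove_right_injective (p := j) (by rw [kaux h]; exact hc)
    exact Fin.succAbove_ne _ t hc' 

private lemma removeTwo_exists {n : ℕ} {j k : Fin (n + 2)} (h : j < k) {m : Fin (n + 2)}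
    (hm1 : m ≠ j) (hm2 : m ≠ k) : ∃ t, removeTwo j k t = m := by
  obtain ⟨u, hu⟩ := Fin.exists_succAbove_eq hm1
  have hu' : u ≠ (⟨(k : ℕ) - 1, by have := k.isLt; omega⟩ : Fin (n + 1)) := by
    intro hc
    apply hm2
    rw [← hu, hc, kaux h]
  obtain ⟨t, ht⟩ := Fin.exists_succAbove_eq hu'
  exact ⟨t, by unfold removeTwo; rw [ht, hu]⟩

private lemma exists_notin {n : ℕ} {j k J K : Fin (n + 2)} (hjk : j < k) (hJK : J < K)
    (hne : (j, k) ≠ (J, K)) : ∃ m : Fin (n + 2), (m = J ∨ m = K) ∧ m ≠ j ∧ m ≠ k := by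
  by_cases hJ1 : J = j
  · subst hJ1
    by_cases hK : K = k
    · exact absurd (by rw [hK]) hne
    · refine ⟨K, Or.inr rfl, fun hc => absurd hc.symm (ne_of_lt hJK), hK⟩
  · by_cases hJ2 : J = k
    · subst hJ2
      refine ⟨K, Or.inr rfl, ?_, ?_⟩
      · rintro rfl; exact absurd (lt_trans hjk hJK) (lt_irrefl _)
      · rintro rfl; exact absurd hJK (lt_irrefl _)
    · exact ⟨J, Or.inl rfl, hJ1, hJ2⟩

/-- Dual family of functionals for a linearly independent family over a field. -/
private lemma exists_dual_family {R : Type*} [Field R] {L : Type*} [AddCommGroup L] [Module R L]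
    {ι : Type*} [DecidableEq ι] {y : ι → L} (hy : LinearIndependent R y) :
    ∃ φ : ι → (L →ₗ[R] R), ∀ i j, φ i (y j) = if i = j then 1 else 0 := by
  obtain ⟨q, hq⟩ := (Submodule.span R (Set.range y)).exists_isCompl
  let proj := (Submodule.span R (Set.range y)).linearProjOfIsCompl q hq
  refine ⟨fun i => (Finsupp.lapply i) ∘ₗ (hy.repr : _ →ₗ[R] (ι →₀ R)) ∘ₗ proj, fun i j => ?_⟩
  have hmem : y j ∈ Submodule.span R (Set.range y) :=
    Submodule.subset_span (Set.mem_range_self j)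
  have h1 : proj (y j) = ⟨y j, hmem⟩ :=
    Submodule.linearProjOfIsCompl_apply_left hq ⟨y j, hmem⟩
  simp only [LinearMap.comp_apply, h1]
  rw [hy.repr_eq_single j ⟨y j, hmem⟩ rfl]
  simp [Finsupp.single_apply, eq_comm]

/-- For a negatively `ℤ`-graded nilpotent Lie algebra `g = g_{−k} ⊕ ⋯ ⊕ g_{−1}` with
Chevalley–Eilenberg boundary `δ`, an `ℓ`-dimensional subspace `e ⊆ g_{−1}` with basis
`x₁, …, x_ℓ` satisfies `δ(x₁ ∧ ⋯ ∧ x_ℓ) = 0` if and only if `e` is an abelian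
subalgebra, i.e. `⁅e, e⁆ = 0`. -/
theorem ce_boundary_vanishes_iff_abelian {R : Type*} [Field R] {L : Type*} [LieRing L]
    [LieAlgebra R L]
    (g : ℤ → Submodule R L)
    (hg : DirectSum.IsInternal g)
    (hneg : ∀ ℓ : ℤ, 0 ≤ ℓ → g ℓ = ⊥)
    (hbr : ∀ (ℓ m : ℤ), ∀ x ∈ g ℓ, ∀ y ∈ g m, ⁅x, y⁆ ∈ g (ℓ + m))
    (n : ℕ)
    (δ : (⋀[R]^(n + 2) L) →ₗ[R] (⋀[R]^(n + 1) L))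
    (hδ : ∀ x : Fin (n + 2) → L,
      δ (wedge (n + 2) x) =
        ∑ p ∈ Finset.univ.filter (fun p : Fin (n + 2) × Fin (n + 2) => p.1 < p.2),
          ((-1 : R) ^ ((p.1 : ℕ) + (p.2 : ℕ) + 1)) •
            wedge (n + 1) (Fin.cons ⁅x p.1, x p.2⁆ (x ∘ removeTwo p.1 p.2)))
    (e : Submodule R L) (he : e ≤ g (-1))
    (x : Fin (n + 2) → L) (hxe : ∀ i, x i ∈ e)
    (hspan : e = Submodule.span R (Set.range x)) (hindep : LinearIndependent R x) :
    δ (wedge (n + 2) x) = 0 ↔ (∀ a ∈ e, ∀ b ∈ e, ⁅a, b⁆ = 0) := by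
  classical
  constructor
  · intro h0
    have key : ∀ J K : Fin (n + 2), J < K → ⁅x J, x K⁆ = 0 := by
      intro J K hJK
      by_contra hb
      set b := ⁅x J, x K⁆ with hbdef
      have hbg : b ∈ g (-2) := by
        have h := hbr (-1) (-1) (x J) (he (hxe J)) (x K) (he (hxe K))
        have : (-1 : ℤ) + -1 = -2 := by norm_num
        rwa [this] at h
      have hbe : b ∉ Submodule.span R (Set.range x) := by
        intro hmem
        rw [← hspan] at hmem
        have hdisj : Disjoint (g (-1)) (g (-2)) :=
          hg.submodule_iSupIndep.pairwiseDisjoint (by norm_num)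
        exact hb (Submodule.disjoint_def.mp hdisj b (he hmem) hbg)
      have hy : LinearIndependent R (Fin.cons b x : Fin (n + 3) → L) :=
        linearIndependent_fin_cons.mpr ⟨hindep, hbe⟩
      obtain ⟨φ, hφ⟩ := exists_dual_family hy
      set ρ : Fin (n + 1) → (L →ₗ[R] R) :=
        Fin.cons (φ 0) (fun s => φ (removeTwo J K s).succ) with hρ
      set F : L [⋀^Fin (n + 1)]→ₗ[R] R :=
        Matrix.detRowAlternating.compLinearMap (LinearMap.pi ρ) with hF
      have hFval : ∀ v : Fin (n + 1) → L,
          F v = Matrix.det (Matrix.of fun t s => ρ s (v t)) := fun v => rfl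
      set G : ExteriorAlgebra R L →ₗ[R] R :=
        ExteriorAlgebra.liftAlternating
          (Function.update (fun i => (0 : L [⋀^Fin i]→ₗ[R] R)) (n + 1) F) with hG
      have hGw : ∀ w : Fin (n + 1) → L,
          G ((wedge (n + 1) w : ⋀[R]^(n + 1) L) : ExteriorAlgebra R L) = F w := by
        intro w
        show ExteriorAlgebra.liftAlternating _ (ExteriorAlgebra.ιMulti R (n + 1) w) = _
        rw [ExteriorAlgebra.liftAlternating_apply_ιMulti, Function.update_self]
      have hφb : ∀ i : Fin (n + 3), φ i b = if i = 0 then 1 else 0 := by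
        intro i
        have := hφ i 0
        rwa [Fin.cons_zero] at this
      have hφx : ∀ (i : Fin (n + 3)) (m : Fin (n + 2)),
          φ i (x m) = if i = m.succ then 1 else 0 := by
        intro i m
        have := hφ i m.succ
        rwa [Fin.cons_succ] at this
      -- value of F on the (J,K) term
      have hone : F (Fin.cons b (x ∘ removeTwo J K)) = 1 := by
        rw [hFval]
        have haux : ∀ M : Matrix (Fin (n + 1)) (Fin (n + 1)) R, M = 1 → M.det = 1 :=
          fun M h => by rw [h, Matrix.det_one]
        apply haux
        ext t s
        rcases Fin.eq_zero_or_eq_succ t with rfl | ⟨t', rfl⟩ <;>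
          rcases Fin.eq_zero_or_eq_succ s with rfl | ⟨s', rfl⟩ <;>
          simp [hρ, Matrix.one_apply, hφb, hφx, Fin.succ_ne_zero, Fin.succ_inj,
            (removeTwo_injective J K).eq_iff, eq_comm]
      -- vanishing of F on all the other terms
      have hzero : ∀ j k : Fin (n + 2), j < k → (j, k) ≠ (J, K) →
          F (Fin.cons ⁅x j, x k⁆ (x ∘ removeTwo j k)) = 0 := by
        intro j k hjk hne
        obtain ⟨m, hmJK, hmj, hmk⟩ := exists_notin hjk hJK hne
        obtain ⟨t0, ht0⟩ := removeTwo_exists hjk hmj hmk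
        rw [hFval]
        apply Matrix.det_eq_zero_of_row_eq_zero t0.succ
        intro s
        have hv : (Fin.cons ⁅x j, x k⁆ (x ∘ removeTwo j k) : Fin (n + 1) → L) t0.succ = x m := by
          rw [Fin.cons_succ, Function.comp_apply, ht0]
        rcases Fin.eq_zero_or_eq_succ s with rfl | ⟨s', rfl⟩
        · simp [hρ, hv, hφx, (Fin.succ_ne_zero m).symm]
        · have hne' : removeTwo J K s' ≠ m := by
            rcases hmJK with rfl | rfl
            · exact (removeTwo_ne hJK s').1
            · exact (removeTwo_ne hJK s').2
          simp [hρ, hv, hφx, Fin.succ_inj, hne']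
      -- apply G to the boundary formula
      have hmain : (0 : R) =
          ∑ p ∈ Finset.univ.filter (fun p : Fin (n + 2) × Fin (n + 2) => p.1 < p.2),
            ((-1 : R) ^ ((p.1 : ℕ) + (p.2 : ℕ) + 1)) •
              F (Fin.cons ⁅x p.1, x p.2⁆ (x ∘ removeTwo p.1 p.2)) := by
        have h1 := (hδ x).symm.trans h0
        have h2 := congrArg (fun z : ⋀[R]^(n + 1) L => G (z : ExteriorAlgebra R L)) h1
        simpa [map_sum, hGw] using h2.symm
      rw [Finset.sum_eq_single_of_mem (J, K)
        (by simp [Finset.mem_filter, hJK])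
        (fun p hp hpne => by
          have hp' : p.1 < p.2 := (Finset.mem_filter.mp hp).2
          rw [hzero p.1 p.2 hp' (by rwa [Prod.mk.eta]), smul_zero])] at hmain
      rw [hone, smul_eq_mul, mul_one] at hmain
      exact pow_ne_zero _ (by norm_num : (-1 : R) ≠ 0) hmain.symm
    have key2 : ∀ i j, ⁅x i, x j⁆ = 0 := by
      intro i j
      rcases lt_trichotomy i j with h | h | h
      · exact key i j h
      · subst h; exact lie_self _
      · rw [← lie_skew, key j i h, neg_zero]
    have inner : ∀ i : Fin (n + 2), ∀ c ∈ Submodule.span R (Set.range x), ⁅x i, c⁆ = 0 := by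
      intro i c hc
      induction hc using Submodule.span_induction with
      | mem w hw => obtain ⟨j, rfl⟩ := hw; exact key2 i j
      | zero => exact lie_zero _
      | add u v _ _ hu hv => rw [lie_add, hu, hv, add_zero]
      | smul r u _ hu => rw [lie_smul, hu, smul_zero]
    intro a ha c hc
    rw [hspan] at ha hc
    induction ha using Submodule.span_induction with
    | mem w hw => obtain ⟨j, rfl⟩ := hw; exact inner j c hc
    | zero => exact zero_lie _
    | add u v _ _ hu hv => rw [add_lie, hu, hv, add_zero]
    | smul r u _ hu => rw [smul_lie, hu, smul_zero]
  · intro hab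
    rw [hδ x]
    apply Finset.sum_eq_zero
    intro p hp
    have hz : ⁅x p.1, x p.2⁆ = 0 := hab _ (hxe p.1) _ (hxe p.2)
    have hw : wedge (n + 1) (Fin.cons ⁅x p.1, x p.2⁆ (x ∘ removeTwo p.1 p.2) : Fin (n + 1) → L) = (0 : ⋀[R]^(n + 1) L) := by
      apply Subtype.ext
      show ExteriorAlgebra.ιMulti R (n + 1) _ = 0
      exact (ExteriorAlgebra.ιMulti R (n + 1)).map_coord_zero 0
        (by rw [Fin.cons_zero, hz])
    rw [hw, smul_zero]
end

section
/- Let Φ be a root system with positive system Δ⁺, Weyl group W, and let T = Σ_{i∈I} T_i for a subset I of simple-root indices (fundamental coweights T_i). For w, w' in W with Δ(w), Δ(w') ⊆ {α ∈ Δ⁺ : α(T) = 1}, if Δ(w') = Δ(w) ∪ {α} for a single root α ∉ Δ(w), then length(w') = length(w) + 1 and w' = r_α w, where r_α is the reflection in α. -/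
/-- A (crystallographic, reduced) root system in a real vector space `V`, together with a
choice of positive roots and a base of simple roots `σ₁, …, σ_r` (forming a basis of `V`). -/
structure RootSystemData (V : Type*) [AddCommGroup V] [Module ℝ V] (r : ℕ) where
  /-- The finite set of roots. -/
  Φ : Finset V
  /-- The positive roots. -/
  pos : Finset V
  /-- The simple roots. -/
  σ : Fin r → V
  /-- The coroot functional attached to each root. -/
  coroot : V → Module.Dual ℝ V
  nonzero : ∀ α ∈ Φ, α ≠ (0 : V)
  neg_mem : ∀ α ∈ Φ, -α ∈ Φ
  pairing_self : ∀ α ∈ Φ, coroot α α = 2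
  reflect_mem : ∀ α ∈ Φ, ∀ β ∈ Φ, β - coroot α β • α ∈ Φ
  crystallographic : ∀ α ∈ Φ, ∀ β ∈ Φ, ∃ n : ℤ, coroot α β = (n : ℝ)
  pos_subset : pos ⊆ Φ
  pos_or_neg : ∀ α ∈ Φ, α ∈ pos ∨ -α ∈ pos
  pos_not_neg : ∀ α ∈ pos, -α ∉ pos
  simple_mem : ∀ i, σ i ∈ pos
  indep : LinearIndependent ℝ σ
  spans : ⊤ ≤ Submodule.span ℝ (Set.range σ)
  pos_sum : ∀ α ∈ pos, ∃ c : Fin r → ℕ, α = ∑ i, (c i : ℝ) • σ i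

namespace RootSystemData

variable {V : Type*} [AddCommGroup V] [Module ℝ V] {r : ℕ}

/-- The reflection in the root `α`. -/
noncomputable def refl (RD : RootSystemData V r) (α : V) (hα : α ∈ RD.Φ) : V ≃ₗ[ℝ] V :=
  Module.reflection (RD.pairing_self α hα)

/-- The simple reflection attached to the simple root `σ i`. -/
noncomputable def simpleRefl (RD : RootSystemData V r) (i : Fin r) : V ≃ₗ[ℝ] V :=
  RD.refl (RD.σ i) (RD.pos_subset (RD.simple_mem i))

/-- The Weyl group: the subgroup of `GL(V)` generated by the simple reflections. -/
noncomputable def weylGroup (RD : RootSystemData V r) : Subgroup (V ≃ₗ[ℝ] V) :=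
  Subgroup.closure (Set.range RD.simpleRefl)

/-- The length of `w`: the minimal length of a word in the simple reflections equal to `w`. -/
noncomputable def length (RD : RootSystemData V r) (w : V ≃ₗ[ℝ] V) : ℕ :=
  sInf {n | ∃ l : List (V ≃ₗ[ℝ] V), l.length = n ∧
    (∀ s ∈ l, ∃ i, s = RD.simpleRefl i) ∧ l.prod = w}

open scoped Classical in
/-- The inversion set `Δ(w) = Δ⁺ ∩ w(Δ⁻)`. -/
noncomputable def inversions (RD : RootSystemData V r) (w : V ≃ₗ[ℝ] V) : Finset V :=
  RD.pos.filter fun α => -(w.symm α) ∈ RD.pos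

/-- The basis of simple roots. -/
noncomputable def simpleBasis (RD : RootSystemData V r) : Module.Basis (Fin r) ℝ V :=
  Module.Basis.mk RD.indep RD.spans

/-- The half-sum of the positive roots. -/
noncomputable def rho (RD : RootSystemData V r) : V := (2 : ℝ)⁻¹ • ∑ α ∈ RD.pos, α

end RootSystemData


namespace RootSystemData

variable {V : Type*} [AddCommGroup V] [Module ℝ V] {r : ℕ} (RD : RootSystemData V r)

/-- A word in the simple reflections. -/
def IsWord (l : List (V ≃ₗ[ℝ] V)) : Prop := ∀ s ∈ l, ∃ i, s = RD.simpleRefl i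

lemma refl_apply {a : V} (ha : a ∈ RD.Φ) (x : V) :
    RD.refl a ha x = x - RD.coroot a x • a :=
  Module.reflection_apply x _

lemma simpleRefl_apply (i : Fin r) (x : V) :
    RD.simpleRefl i x = x - RD.coroot (RD.σ i) x • RD.σ i :=
  Module.reflection_apply x (RD.pairing_self _ (RD.pos_subset (RD.simple_mem i)))

lemma simpleRefl_self (i : Fin r) : RD.simpleRefl i (RD.σ i) = -(RD.σ i) :=
  Module.reflection_apply_self (RD.pairing_self _ (RD.pos_subset (RD.simple_mem i)))

lemma simpleRefl_invol (i : Fin r) (x : V) :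
    RD.simpleRefl i (RD.simpleRefl i x) = x :=
  Module.involutive_reflection (RD.pairing_self _ (RD.pos_subset (RD.simple_mem i))) x

lemma refl_mem {a : V} (ha : a ∈ RD.Φ) {x : V} (hx : x ∈ RD.Φ) :
    RD.refl a ha x ∈ RD.Φ := by
  rw [RD.refl_apply ha x]; exact RD.reflect_mem a ha x hx

lemma simpleRefl_mem (i : Fin r) {x : V} (hx : x ∈ RD.Φ) : RD.simpleRefl i x ∈ RD.Φ :=
  RD.refl_mem _ hx

lemma simpleRefl_mul_self (i : Fin r) : RD.simpleRefl i * RD.simpleRefl i = 1 := by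
  apply LinearEquiv.toLinearMap_injective
  apply LinearMap.ext
  intro x
  exact RD.simpleRefl_invol i x

lemma simpleRefl_inv (i : Fin r) : (RD.simpleRefl i)⁻¹ = RD.simpleRefl i :=
  inv_eq_of_mul_eq_one_right (RD.simpleRefl_mul_self i)

lemma simpleRefl_wg (i : Fin r) : RD.simpleRefl i ∈ RD.weylGroup :=
  Subgroup.subset_closure (Set.mem_range_self i)

lemma word_prod_mem {l : List (V ≃ₗ[ℝ] V)} (hl : RD.IsWord l) : l.prod ∈ RD.weylGroup := by
  refine list_prod_mem ?_
  intro s hs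
  obtain ⟨i, rfl⟩ := hl s hs
  exact RD.simpleRefl_wg i

lemma exists_word {w : V ≃ₗ[ℝ] V} (hw : w ∈ RD.weylGroup) :
    ∃ l, RD.IsWord l ∧ l.prod = w := by
  have h1 : w ∈ (Subgroup.closure (Set.range RD.simpleRefl)).toSubmonoid := hw
  rw [Subgroup.closure_toSubmonoid] at h1
  obtain ⟨l, hl, hp⟩ := Submonoid.exists_list_of_mem_closure h1
  refine ⟨l, ?_, hp⟩
  intro s hs
  rcases hl s hs with h | h
  · obtain ⟨i, hi⟩ := h
    exact ⟨i, hi.symm⟩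
  · rw [Set.mem_inv] at h
    obtain ⟨i, hi⟩ := h
    exact ⟨i, by rw [← inv_inv s, ← hi, RD.simpleRefl_inv]⟩

lemma word_maps_Φ : ∀ (l : List (V ≃ₗ[ℝ] V)), RD.IsWord l → ∀ {x : V}, x ∈ RD.Φ →
    l.prod x ∈ RD.Φ := by
  intro l
  induction l with
  | nil => intro _ x hx; simpa using hx
  | cons s t ih =>
    intro hl x hx
    obtain ⟨i, rfl⟩ := hl s List.mem_cons_self
    have ht : RD.IsWord t := fun a ha => hl a (List.mem_cons_of_mem _ ha)
    rw [List.prod_cons]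
    exact RD.simpleRefl_mem i (ih ht hx)

lemma mem_Φ_of_weyl {w : V ≃ₗ[ℝ] V} (hw : w ∈ RD.weylGroup) {x : V} (hx : x ∈ RD.Φ) :
    w x ∈ RD.Φ := by
  obtain ⟨l, hl, rfl⟩ := RD.exists_word hw
  exact RD.word_maps_Φ l hl hx

lemma symm_mem_Φ_of_weyl {w : V ≃ₗ[ℝ] V} (hw : w ∈ RD.weylGroup) {x : V} (hx : x ∈ RD.Φ) :
    w.symm x ∈ RD.Φ :=
  RD.mem_Φ_of_weyl (inv_mem hw) hx

lemma simpleBasis_apply (i : Fin r) : RD.simpleBasis i = RD.σ i := Module.Basis.mk_apply _ _ i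

lemma repr_simple (i j : Fin r) :
    RD.simpleBasis.repr (RD.σ i) j = if i = j then 1 else 0 := by
  rw [← RD.simpleBasis_apply i, Module.Basis.repr_self, Finsupp.single_apply]

lemma repr_nonneg {β : V} (hβ : β ∈ RD.pos) (j : Fin r) : 0 ≤ RD.simpleBasis.repr β j := by
  obtain ⟨c, hc⟩ := RD.pos_sum β hβ
  have hβ' : β = ∑ i, ((c i : ℝ)) • RD.simpleBasis i := by
    rw [hc]
    exact Finset.sum_congr rfl fun i _ => by rw [RD.simpleBasis_apply]
  rw [hβ', Module.Basis.repr_sum_self]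
  exact Nat.cast_nonneg _

lemma mem_pos_of_nonneg {x : V} (hx : x ∈ RD.Φ) (h : ∀ j, 0 ≤ RD.simpleBasis.repr x j) :
    x ∈ RD.pos := by
  rcases RD.pos_or_neg x hx with h1 | h1
  · exact h1
  · exfalso
    have h2 : ∀ j, RD.simpleBasis.repr x j = 0 := by
      intro j
      have h3 := RD.repr_nonneg h1 j
      rw [map_neg] at h3
      simp only [Finsupp.neg_apply, Left.nonneg_neg_iff] at h3
      exact le_antisymm h3 (h j)
    have h4 : RD.simpleBasis.repr x = 0 := by
      ext j; simpa using h2 j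
    exact RD.nonzero x hx (by simpa using (LinearEquiv.map_eq_zero_iff _).mp h4)

lemma smul_mem_pos {x δ : V} (hx : x ∈ RD.Φ) (hδ : δ ∈ RD.pos) {c : ℝ} (hc : 0 ≤ c)
    (hxc : x = c • δ) : x ∈ RD.pos := by
  refine RD.mem_pos_of_nonneg hx fun j => ?_
  rw [hxc, map_smul]
  simp only [Finsupp.smul_apply, smul_eq_mul]
  exact mul_nonneg hc (RD.repr_nonneg hδ j)

lemma image_pos_mem {v : V ≃ₗ[ℝ] V} (hv : ∀ i, v (RD.σ i) ∈ RD.pos) {β : V} (hβ : β ∈ RD.pos)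
    (hvβ : v β ∈ RD.Φ) : v β ∈ RD.pos := by
  obtain ⟨c, hc⟩ := RD.pos_sum β hβ
  refine RD.mem_pos_of_nonneg hvβ fun j => ?_
  have h1 : v β = ∑ i, ((c i : ℝ)) • v (RD.σ i) := by
    rw [hc, map_sum]
    exact Finset.sum_congr rfl fun i _ => by rw [map_smul]
  rw [h1, map_sum, Finset.sum_apply']
  refine Finset.sum_nonneg fun i _ => ?_
  rw [map_smul]
  simp only [Finsupp.smul_apply, smul_eq_mul]
  exact mul_nonneg (Nat.cast_nonneg _) (RD.repr_nonneg (hv i) j)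

lemma coord_eq_zero_of_flip {β : V} (hβ : β ∈ RD.pos) {i : Fin r}
    (h : RD.simpleRefl i β ∉ RD.pos) : ∀ j, j ≠ i → RD.simpleBasis.repr β j = 0 := by
  intro j hj
  have hβΦ := RD.pos_subset hβ
  have h1 : RD.simpleRefl i β ∈ RD.Φ := RD.simpleRefl_mem i hβΦ
  have h2 : -(RD.simpleRefl i β) ∈ RD.pos := (RD.pos_or_neg _ h1).resolve_left h
  have e1 : RD.simpleBasis.repr (RD.simpleRefl i β) j = RD.simpleBasis.repr β j := by
    rw [RD.simpleRefl_apply, map_sub, map_smul]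
    simp only [Finsupp.sub_apply, Finsupp.smul_apply, smul_eq_mul]
    rw [RD.repr_simple, if_neg (fun h' => hj h'.symm)]
    ring
  have e2 := RD.repr_nonneg h2 j
  rw [map_neg] at e2
  simp only [Finsupp.neg_apply, Left.nonneg_neg_iff] at e2
  have e3 := RD.repr_nonneg hβ j
  rw [e1] at e2
  exact le_antisymm e2 e3

lemma eq_smul_of_flip {β : V} (hβ : β ∈ RD.pos) {i : Fin r}
    (h : RD.simpleRefl i β ∉ RD.pos) :
    β = RD.simpleBasis.repr β i • RD.σ i := by
  conv_lhs => rw [← RD.simpleBasis.sum_repr β]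
  rw [Finset.sum_eq_single i]
  · rw [RD.simpleBasis_apply]
  · intro j _ hj
    rw [RD.coord_eq_zero_of_flip hβ h j hj, zero_smul]
  · intro hi
    exact absurd (Finset.mem_univ i) hi

lemma refl_unique {g₁ g₂ : V ≃ₗ[ℝ] V} {f₁ f₂ : Module.Dual ℝ V} {a : V} {c : ℝ}
    (hc : c ≠ 0) (ha : a ≠ 0)
    (hg₁ : ∀ x, g₁ x = x - f₁ x • (c • a)) (hg₂ : ∀ x, g₂ x = x - f₂ x • a)
    (hf₁ : f₁ (c • a) = 2) (hf₂ : f₂ a = 2)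
    (hΦ₁ : ∀ x ∈ RD.Φ, g₁ x ∈ RD.Φ) (hΦ₂ : ∀ x ∈ RD.Φ, g₂ x ∈ RD.Φ) : g₁ = g₂ := by
  have hf₁a : c * f₁ a = 2 := by rwa [map_smul, smul_eq_mul] at hf₁
  have hka : c * f₁ a - f₂ a = 0 := by rw [hf₁a, hf₂]; ring
  have key : ∀ y, g₂ (g₁ y) = y + (c * f₁ y - f₂ y) • a := by
    intro y
    rw [hg₁, hg₂, map_sub, map_smul]
    have h1 : f₂ (c • a) = c * 2 := by rw [map_smul, smul_eq_mul, hf₂]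
    rw [h1]
    simp only [smul_eq_mul, smul_smul]
    module
  have hklin : ∀ (y : V) (s : ℝ), c * f₁ (y + s • a) - f₂ (y + s • a) = c * f₁ y - f₂ y := by
    intro y s
    rw [map_add, map_add, map_smul, map_smul]
    simp only [smul_eq_mul]
    linear_combination s * hka
  have iter : ∀ (y : V) (n : ℕ),
      (fun t => g₂ (g₁ t))^[n] y = y + ((n : ℝ) * (c * f₁ y - f₂ y)) • a := by
    intro y n
    induction n with
    | zero => simp
    | succ n ih =>
      rw [Function.iterate_succ_apply', ih, key, hklin]
      rw [add_assoc, ← add_smul]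
      push_cast
      ring_nf
  have hΦk : ∀ x ∈ RD.Φ, c * f₁ x - f₂ x = 0 := by
    intro x hx
    by_contra hkx
    have hmem : ∀ n : ℕ, (fun t => g₂ (g₁ t))^[n] x ∈ RD.Φ := by
      intro n
      induction n with
      | zero => simpa using hx
      | succ n ih =>
        rw [Function.iterate_succ_apply']
        exact hΦ₂ _ (hΦ₁ _ ih)
    haveI : Fintype {y : V // y ∈ RD.Φ} := FinsetCoe.fintype RD.Φ
    obtain ⟨m, n, hmn, he⟩ := Finite.exists_ne_map_eq_of_infinite
      (fun n : ℕ => (⟨x + ((n : ℝ) * (c * f₁ x - f₂ x)) • a, by rw [← iter]; exact hmem n⟩ :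
        {y : V // y ∈ RD.Φ}))
    apply hmn
    have he' : x + ((m : ℝ) * (c * f₁ x - f₂ x)) • a
        = x + ((n : ℝ) * (c * f₁ x - f₂ x)) • a := congrArg Subtype.val he
    have he2 : ((m : ℝ) * (c * f₁ x - f₂ x)) • a = ((n : ℝ) * (c * f₁ x - f₂ x)) • a := by
      exact add_left_cancel he'
    have he3 : (m : ℝ) * (c * f₁ x - f₂ x) = (n : ℝ) * (c * f₁ x - f₂ x) :=
      smul_left_injective ℝ ha he2
    have he4 : (m : ℝ) = (n : ℝ) := mul_right_cancel₀ hkx he3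
    exact_mod_cast he4
  have hspan : Submodule.span ℝ (Set.range RD.σ) = ⊤ := top_unique RD.spans
  have hlin : (c • f₁ - f₂ : Module.Dual ℝ V) = 0 := by
    apply LinearMap.ext_on hspan
    rintro x ⟨i, rfl⟩
    have h5 := hΦk (RD.σ i) (RD.pos_subset (RD.simple_mem i))
    simp only [LinearMap.sub_apply, LinearMap.smul_apply, smul_eq_mul, LinearMap.zero_apply]
    linarith
  apply LinearEquiv.toLinearMap_injective
  apply LinearMap.ext
  intro x
  have h6 := LinearMap.congr_fun hlin x
  simp only [LinearMap.sub_apply, LinearMap.smul_apply, smul_eq_mul,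
    LinearMap.zero_apply] at h6
  have hx2 : f₂ x = c * f₁ x := by linarith
  show g₁ x = g₂ x
  rw [hg₁, hg₂, hx2, smul_smul, mul_comm]

lemma conj_simpleRefl {u : V ≃ₗ[ℝ] V} (hu : u ∈ RD.weylGroup) (i : Fin r) {c : ℝ} {a : V}
    (haΦ : a ∈ RD.Φ) (hua : u (RD.σ i) = c • a) :
    u * RD.simpleRefl i * u⁻¹ = RD.refl a haΦ := by
  have hσΦ : RD.σ i ∈ RD.Φ := RD.pos_subset (RD.simple_mem i)
  have huσ : u (RD.σ i) ∈ RD.Φ := RD.mem_Φ_of_weyl hu hσΦ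
  have hc : c ≠ 0 := by
    rintro rfl
    exact RD.nonzero _ huσ (by rw [hua, zero_smul])
  have ha : a ≠ 0 := by
    rintro rfl
    exact RD.nonzero _ huσ (by rw [hua, smul_zero])
  refine RD.refl_unique (f₁ := (RD.coroot (RD.σ i)).comp u.symm.toLinearMap)
    (f₂ := RD.coroot a) (a := a) (c := c) hc ha ?_ ?_ ?_ ?_ ?_ ?_
  · intro x
    show u (RD.simpleRefl i (u.symm x)) = _
    rw [RD.simpleRefl_apply, map_sub, map_smul, u.apply_symm_apply, hua]
    rfl
  · intro x
    exact RD.refl_apply haΦ x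
  · show RD.coroot (RD.σ i) (u.symm (c • a)) = 2
    rw [← hua, u.symm_apply_apply]
    exact RD.pairing_self _ hσΦ
  · exact RD.pairing_self a haΦ
  · intro x hx
    show u (RD.simpleRefl i (u.symm x)) ∈ RD.Φ
    exact RD.mem_Φ_of_weyl hu (RD.simpleRefl_mem i (RD.symm_mem_Φ_of_weyl hu hx))
  · intro x hx
    rw [RD.refl_apply]
    exact RD.reflect_mem a haΦ x hx

lemma exchange : ∀ (l : List (V ≃ₗ[ℝ] V)), RD.IsWord l → ∀ i : Fin r,
    -(l.prod (RD.σ i)) ∈ RD.pos →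
    ∃ l', RD.IsWord l' ∧ l'.length = l.length - 1 ∧ l'.prod = l.prod * RD.simpleRefl i := by
  intro l
  induction l with
  | nil =>
    intro _ i hneg
    rw [List.prod_nil] at hneg
    exact absurd hneg (RD.pos_not_neg _ (RD.simple_mem i))
  | cons s t ih =>
    intro hw i hneg
    obtain ⟨j, rfl⟩ := hw s List.mem_cons_self
    have hwt : RD.IsWord t := fun a ha => hw a (List.mem_cons_of_mem _ ha)
    have htW : t.prod ∈ RD.weylGroup := RD.word_prod_mem hwt
    have hσΦ : RD.σ i ∈ RD.Φ := RD.pos_subset (RD.simple_mem i)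
    have htσΦ : t.prod (RD.σ i) ∈ RD.Φ := RD.mem_Φ_of_weyl htW hσΦ
    rw [List.prod_cons] at hneg ⊢
    by_cases hcase : -(t.prod (RD.σ i)) ∈ RD.pos
    · obtain ⟨l'', hw'', hlen'', hprod''⟩ := ih hwt i hcase
      have htne : t ≠ [] := by
        rintro rfl
        rw [List.prod_nil] at hcase
        exact RD.pos_not_neg _ (RD.simple_mem i) hcase
      have htpos : 1 ≤ t.length := List.length_pos_iff.mpr htne
      refine ⟨RD.simpleRefl j :: l'', ?_, ?_, ?_⟩
      · intro a ha
        rcases List.mem_cons.mp ha with rfl | ha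
        · exact ⟨j, rfl⟩
        · exact hw'' a ha
      · simp only [List.length_cons, hlen'']
        omega
      · rw [List.prod_cons, hprod'', mul_assoc]
    · have htσpos : t.prod (RD.σ i) ∈ RD.pos := (RD.pos_or_neg _ htσΦ).resolve_right hcase
      have hflip : RD.simpleRefl j (t.prod (RD.σ i)) ∉ RD.pos := by
        intro hmem
        exact RD.pos_not_neg _ hmem hneg
      have hβ := RD.eq_smul_of_flip htσpos hflip
      have hconj := RD.conj_simpleRefl htW i (RD.pos_subset (RD.simple_mem j)) hβ
      have hrfl : RD.refl (RD.σ j) (RD.pos_subset (RD.simple_mem j)) = RD.simpleRefl j := rfl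
      rw [hrfl] at hconj
      have hconj' : t.prod * RD.simpleRefl i = RD.simpleRefl j * t.prod := by
        calc t.prod * RD.simpleRefl i
            = (t.prod * RD.simpleRefl i * (t.prod)⁻¹) * t.prod := by group
          _ = RD.simpleRefl j * t.prod := by rw [hconj]
      refine ⟨t, hwt, by simp, ?_⟩
      rw [mul_assoc, hconj', ← mul_assoc, RD.simpleRefl_mul_self, one_mul]

lemma exists_neg_simple : ∀ (k : ℕ) (l : List (V ≃ₗ[ℝ] V)), l.length ≤ k → RD.IsWord l →
    l.prod ≠ 1 → ∃ i, -(l.prod (RD.σ i)) ∈ RD.pos := by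
  intro k
  induction k with
  | zero =>
    intro l hl _ hne
    have h0 : l = [] := List.length_eq_zero_iff.mp (Nat.le_zero.mp hl)
    exact absurd (by rw [h0, List.prod_nil]) hne
  | succ k ih =>
    intro l hl hw hne
    rcases List.eq_nil_or_concat l with rfl | ⟨l', s, rfl⟩
    · exact absurd List.prod_nil hne
    · rw [List.concat_eq_append] at *
      obtain ⟨j, rfl⟩ := hw s (by simp)
      have hwl' : RD.IsWord l' := fun a ha => hw a (by simp [ha])
      have hprod : (l' ++ [RD.simpleRefl j]).prod = l'.prod * RD.simpleRefl j := by simp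
      have htΦ : l'.prod (RD.σ j) ∈ RD.Φ :=
        RD.mem_Φ_of_weyl (RD.word_prod_mem hwl') (RD.pos_subset (RD.simple_mem j))
      by_cases hc : l'.prod (RD.σ j) ∈ RD.pos
      · refine ⟨j, ?_⟩
        rw [hprod]
        have h1 : (l'.prod * RD.simpleRefl j) (RD.σ j) = -(l'.prod (RD.σ j)) := by
          show l'.prod (RD.simpleRefl j (RD.σ j)) = _
          rw [RD.simpleRefl_self, map_neg]
        rw [h1, neg_neg]
        exact hc
      · have hneg : -(l'.prod (RD.σ j)) ∈ RD.pos := (RD.pos_or_neg _ htΦ).resolve_left hc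
        obtain ⟨l'', hw'', hlen'', hprod''⟩ := RD.exchange l' hwl' j hneg
        have hpe : l''.prod = (l' ++ [RD.simpleRefl j]).prod := by rw [hprod'', hprod]
        have hlen : l''.length ≤ k := by
          have h2 : l'.length + 1 ≤ k + 1 := by simpa using hl
          omega
        obtain ⟨i, hi⟩ := ih l'' hlen hw'' (by rw [hpe]; exact hne)
        exact ⟨i, by rw [← hpe]; exact hi⟩

lemma eq_one_of_pos_stable {u : V ≃ₗ[ℝ] V} (hu : u ∈ RD.weylGroup)
    (h : ∀ β ∈ RD.pos, u β ∈ RD.pos) : u = 1 := by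
  by_contra hne
  obtain ⟨l, hwl, rfl⟩ := RD.exists_word hu
  obtain ⟨i, hi⟩ := RD.exists_neg_simple l.length l le_rfl hwl hne
  exact RD.pos_not_neg _ (h _ (RD.simple_mem i)) hi

lemma length_le {l : List (V ≃ₗ[ℝ] V)} (hw : RD.IsWord l) {u : V ≃ₗ[ℝ] V}
    (hp : l.prod = u) : RD.length u ≤ l.length :=
  Nat.sInf_le ⟨l, rfl, hw, hp⟩

lemma exists_min_word {u : V ≃ₗ[ℝ] V} (hu : u ∈ RD.weylGroup) :
    ∃ l, RD.IsWord l ∧ l.prod = u ∧ l.length = RD.length u := by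
  obtain ⟨l0, hw0, hp0⟩ := RD.exists_word hu
  have hne : {n | ∃ l : List (V ≃ₗ[ℝ] V), l.length = n ∧
      (∀ s ∈ l, ∃ i, s = RD.simpleRefl i) ∧ l.prod = u}.Nonempty :=
    ⟨l0.length, l0, rfl, hw0, hp0⟩
  obtain ⟨l, hlen, hwl, hp⟩ := Nat.sInf_mem hne
  exact ⟨l, hwl, hp, hlen⟩

lemma mem_inversions {x : V ≃ₗ[ℝ] V} {β : V} :
    β ∈ RD.inversions x ↔ β ∈ RD.pos ∧ -(x.symm β) ∈ RD.pos := by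
  simp [inversions, Finset.mem_filter]

end RootSystemData

/-- Let `T = Σ_{i ∈ I} T_i` be a sum of fundamental coweights (so `α(T) = Σ_{i∈I}` of the
simple-root coordinates of `α`). If `w, w'` lie in the Weyl group, `Δ(w)` and `Δ(w')`
consist of roots with `α(T) = 1`, and `Δ(w') = Δ(w) ∪ {α}` for a single root
`α ∉ Δ(w)`, then `length w' = length w + 1` and `w' = r_α * w`. -/
theorem inversion_extension_step {V : Type*} [AddCommGroup V] [Module ℝ V] {r : ℕ}
    (RD : RootSystemData V r) (I : Finset (Fin r))
    (w w' : V ≃ₗ[ℝ] V) (hw : w ∈ RD.weylGroup) (hw' : w' ∈ RD.weylGroup)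
    (hΔw : ∀ β ∈ RD.inversions w, ∑ i ∈ I, RD.simpleBasis.repr β i = 1)
    (hΔw' : ∀ β ∈ RD.inversions w', ∑ i ∈ I, RD.simpleBasis.repr β i = 1)
    (α : V) (hαΦ : α ∈ RD.Φ) (hα : α ∉ RD.inversions w)
    (hunion : (RD.inversions w' : Set V) = insert α (RD.inversions w : Set V)) :
    RD.length w' = RD.length w + 1 ∧ w' = RD.refl α hαΦ * w := by
  classical
  have hsets : RD.inversions w' = insert α (RD.inversions w) := by
    apply Finset.coe_inj.mp
    rw [hunion, Finset.coe_insert]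
  have hαinv' : α ∈ RD.inversions w' := by
    rw [hsets]; exact Finset.mem_insert_self _ _
  obtain ⟨hαpos, hαw'⟩ := RD.mem_inversions.mp hαinv'
  have hwsymmΦ : w.symm α ∈ RD.Φ := RD.symm_mem_Φ_of_weyl hw hαΦ
  have hwα : w.symm α ∈ RD.pos := by
    rcases RD.pos_or_neg _ hwsymmΦ with h | h
    · exact h
    · exact absurd (RD.mem_inversions.mpr ⟨hαpos, h⟩) hα
  set v := w⁻¹ * w' with hv
  have hvW : v ∈ RD.weylGroup := mul_mem (inv_mem hw) hw'
  have hvsymm : ∀ x : V, v.symm x = w'.symm (w x) := by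
    intro x
    show (v⁻¹ : V ≃ₗ[ℝ] V) x = _
    rw [hv, mul_inv_rev, inv_inv]
    rfl
  have claimA : w.symm α ∈ RD.inversions v := by
    refine RD.mem_inversions.mpr ⟨hwα, ?_⟩
    rw [hvsymm, w.apply_symm_apply]
    exact hαw'
  have claimB : ∀ β ∈ RD.inversions v, β = w.symm α := by
    intro β hβ
    obtain ⟨hβpos, hβneg⟩ := RD.mem_inversions.mp hβ
    rw [hvsymm] at hβneg
    have hγΦ : w β ∈ RD.Φ := RD.mem_Φ_of_weyl hw (RD.pos_subset hβpos)
    rcases RD.pos_or_neg _ hγΦ with hγ | hγ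
    · have h1 : w β ∈ RD.inversions w' := RD.mem_inversions.mpr ⟨hγ, hβneg⟩
      have h2 : w β ∉ RD.inversions w := by
        intro hmem
        obtain ⟨_, h3⟩ := RD.mem_inversions.mp hmem
        rw [w.symm_apply_apply] at h3
        exact RD.pos_not_neg _ hβpos h3
      rw [hsets] at h1
      rcases Finset.mem_insert.mp h1 with h3 | h3
      · rw [← h3, w.symm_apply_apply]
      · exact absurd h3 h2
    · exfalso
      have h1 : -(w β) ∈ RD.inversions w := by
        refine RD.mem_inversions.mpr ⟨hγ, ?_⟩
        rw [map_neg, w.symm_apply_apply, neg_neg]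
        exact hβpos
      have h2 : -(w β) ∈ RD.inversions w' := by
        rw [hsets]; exact Finset.mem_insert_of_mem h1
      obtain ⟨_, h3⟩ := RD.mem_inversions.mp h2
      rw [map_neg, neg_neg] at h3
      exact RD.pos_not_neg _ h3 hβneg
  have hexists : ∃ i, RD.σ i ∈ RD.inversions v := by
    by_contra hnone
    push_neg at hnone
    have hstable : ∀ i, v.symm (RD.σ i) ∈ RD.pos := by
      intro i
      have hΦi : v.symm (RD.σ i) ∈ RD.Φ :=
        RD.symm_mem_Φ_of_weyl hvW (RD.pos_subset (RD.simple_mem i))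
      rcases RD.pos_or_neg _ hΦi with h | h
      · exact h
      · exact absurd (RD.mem_inversions.mpr ⟨RD.simple_mem i, h⟩) (hnone i)
    have hstable' : ∀ β ∈ RD.pos, v.symm β ∈ RD.pos := by
      intro β hβ
      exact RD.image_pos_mem (v := v.symm) hstable hβ
        (RD.symm_mem_Φ_of_weyl hvW (RD.pos_subset hβ))
    have hv1 : v⁻¹ = 1 := RD.eq_one_of_pos_stable (inv_mem hvW) hstable'
    have hv2 : v = 1 := by rwa [inv_eq_one] at hv1
    obtain ⟨h1, h2⟩ := RD.mem_inversions.mp claimA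
    rw [hv2] at h2
    exact RD.pos_not_neg _ h1 h2
  obtain ⟨i, hσi⟩ := hexists
  have hσα : RD.σ i = w.symm α := claimB _ hσi
  have hwσ : w (RD.σ i) = α := by rw [hσα, w.apply_symm_apply]
  obtain ⟨_, hσneg⟩ := RD.mem_inversions.mp hσi
  have hvs : v = RD.simpleRefl i := by
    have hstable : ∀ β ∈ RD.pos, (v⁻¹ * RD.simpleRefl i) β ∈ RD.pos := by
      intro β hβ
      have hβΦ := RD.pos_subset hβ
      have happ : (v⁻¹ * RD.simpleRefl i) β = v.symm (RD.simpleRefl i β) := rfl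
      by_cases hcase : RD.simpleRefl i β ∈ RD.pos
      · have hsΦ : RD.simpleRefl i β ∈ RD.Φ := RD.simpleRefl_mem i hβΦ
        have hvsΦ : v.symm (RD.simpleRefl i β) ∈ RD.Φ := RD.symm_mem_Φ_of_weyl hvW hsΦ
        rw [happ]
        rcases RD.pos_or_neg _ hvsΦ with h | h
        · exact h
        · exfalso
          have hmem : RD.simpleRefl i β ∈ RD.inversions v := RD.mem_inversions.mpr ⟨hcase, h⟩
          have he : RD.simpleRefl i β = RD.σ i := by rw [claimB _ hmem, ← hσα]
          have hβe : β = -(RD.σ i) := by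
            have h4 := congrArg (RD.simpleRefl i) he
            rw [RD.simpleRefl_invol, RD.simpleRefl_self] at h4
            exact h4
          exact RD.pos_not_neg _ (RD.simple_mem i) (hβe ▸ hβ)
      · set cc := RD.simpleBasis.repr β i with hcc
        have hcβ : β = cc • RD.σ i := RD.eq_smul_of_flip hβ hcase
        have hsi : RD.simpleRefl i β = -β := by
          conv_lhs => rw [hcβ]
          rw [map_smul, RD.simpleRefl_self, smul_neg, ← hcβ]
        rw [happ, hsi, map_neg]
        have heq : -(v.symm β) = cc • (-(v.symm (RD.σ i))) := by
          rw [hcβ, map_smul, smul_neg]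
        have hccnn : 0 ≤ cc := RD.repr_nonneg hβ i
        have hΦm : -(v.symm β) ∈ RD.Φ :=
          RD.neg_mem _ (RD.symm_mem_Φ_of_weyl hvW hβΦ)
        exact RD.smul_mem_pos hΦm hσneg hccnn heq
    have h1 : v⁻¹ * RD.simpleRefl i = 1 :=
      RD.eq_one_of_pos_stable (mul_mem (inv_mem hvW) (RD.simpleRefl_wg i)) hstable
    exact inv_mul_eq_one.mp h1
  have hw'eq : w' = w * RD.simpleRefl i := by
    rw [← hvs, hv]
    group
  have hconj := RD.conj_simpleRefl hw i hαΦ (c := 1) (by rw [one_smul]; exact hwσ)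
  have hrefl : RD.refl α hαΦ * w = w' := by
    rw [← hconj, hw'eq]
    group
  obtain ⟨lw, hlww, hlwp, hlwlen⟩ := RD.exists_min_word hw
  have hle : RD.length w' ≤ RD.length w + 1 := by
    have hword : RD.IsWord (lw ++ [RD.simpleRefl i]) := by
      intro s hs
      rcases List.mem_append.mp hs with h | h
      · exact hlww s h
      · exact ⟨i, by simpa using h⟩
    have hprod : (lw ++ [RD.simpleRefl i]).prod = w' := by
      rw [List.prod_append, List.prod_singleton, hlwp, ← hw'eq]
    have h7 := RD.length_le hword hprod
    simpa [hlwlen] using h7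
  obtain ⟨lw', hlw'w, hlw'p, hlw'len⟩ := RD.exists_min_word hw'
  have hneg : -(lw'.prod (RD.σ i)) ∈ RD.pos := by
    rw [hlw'p]
    have h8 : w' (RD.σ i) = -α := by
      rw [hw'eq]
      show w (RD.simpleRefl i (RD.σ i)) = -α
      rw [RD.simpleRefl_self, map_neg, hwσ]
    rw [h8, neg_neg]
    exact hαpos
  obtain ⟨l'', hw'', hlen'', hprod''⟩ := RD.exchange lw' hlw'w i hneg
  have hprodw : l''.prod = w := by
    rw [hprod'', hlw'p, hw'eq, mul_assoc, RD.simpleRefl_mul_self, mul_one]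
  have hlw : RD.length w ≤ RD.length w' - 1 := by
    have h9 := RD.length_le hw'' hprodw
    omega
  have hpos1 : 1 ≤ RD.length w' := by
    by_contra h0
    push_neg at h0
    have h1 : lw'.length = 0 := by omega
    have h2 : lw' = [] := List.length_eq_zero_iff.mp h1
    rw [h2, List.prod_nil] at hlw'p
    rw [← hlw'p] at hαw'
    exact RD.pos_not_neg _ hαpos hαw'
  refine ⟨by omega, hrefl.symm⟩
end
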